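/- Let a₀, a₁, b₀, b₁, b₂ be real numbers with b₂ > 0, let z be a complex number with Re(z) ≤ 0, let h > 0, and suppose that both complex roots of the quadratic p(w) = (1 − b₂·z)·w² + (a₁ − b₁·z)·w + (a₀ − b₀·z) have modulus strictly less than 1. Let M ≥ 0 and let g : ℕ → ℂ satisfy |g_n| ≤ M for all n. Then there exists a constant C ≥ 0, depending only on a₀, a₁, b₀, b₁, b₂, z, h, M but not on the initial values, such that every sequence y : ℕ → ℂ satisfying (1 − b₂·z)·y_{n+2} + (a₁ − b₁·z)·y_{n+1} + (a₀ − b₀·z)·y_n = h·(b₂·g_{n+2} + b₁·g_{n+1} + b₀·g_n) for all n is bounded (sup_n |y_n| < ∞) and satisfies limsup_{n→∞} |y_n| ≤ C. (Sufficiency direction of the equivalence between A-stability and uniform-in-time stability.) -/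

import Mathlib

open Filter

/-- Sufficiency direction of the equivalence between A-stability and uniform-in-time
stability: if both roots of (1 − b₂z)w² + (a₁ − b₁z)w + (a₀ − b₀z) lie strictly inside
the unit disc, then every numerical solution of the two-step scheme applied to the
damped-forced equation with bounded forcing remains uniformly bounded in time, with
limsup bound independent of the initial values. -/
theorem two_step_uniform_in_time_stable
    (a₀ a₁ b₀ b₁ b₂ : ℝ) (hb₂ : 0 < b₂)
    (z : ℂ) (hz : z.re ≤ 0) (h : ℝ) (hh : 0 < h)
    (hroots : ∀ w : ℂ,
      (1 - (b₂ : ℂ) * z) * w ^ 2 + ((a₁ : ℂ) - (b₁ : ℂ) * z) * w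
        + ((a₀ : ℂ) - (b₀ : ℂ) * z) = 0 → ‖w‖ < 1)
    (M : ℝ) (hM : 0 ≤ M) (g : ℕ → ℂ) (hg : ∀ n, ‖g n‖ ≤ M) :
    ∃ C : ℝ, 0 ≤ C ∧
      ∀ y : ℕ → ℂ,
        (∀ n, (1 - (b₂ : ℂ) * z) * y (n + 2) + ((a₁ : ℂ) - (b₁ : ℂ) * z) * y (n + 1)
            + ((a₀ : ℂ) - (b₀ : ℂ) * z) * y n
          = (h : ℂ) * ((b₂ : ℂ) * g (n + 2) + (b₁ : ℂ) * g (n + 1) + (b₀ : ℂ) * g n)) →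
        (∃ K : ℝ, ∀ n, ‖y n‖ ≤ K) ∧
        limsup (fun n => ‖y n‖) atTop ≤ C := by
  -- Notation for the coefficients.
  set A : ℂ := 1 - (b₂ : ℂ) * z with hA_def
  set B : ℂ := (a₁ : ℂ) - (b₁ : ℂ) * z with hB_def
  set Cc : ℂ := (a₀ : ℂ) - (b₀ : ℂ) * z with hCc_def
  -- The leading coefficient is nonzero.
  have hA : A ≠ 0 := by
    intro hA0
    have hbz : (1:ℂ) = (b₂ : ℂ) * z := sub_eq_zero.mp hA0
    have hre := congrArg Complex.re hbz
    simp [Complex.mul_re] at hre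
    nlinarith [mul_nonpos_of_nonneg_of_nonpos hb₂.le hz]
  -- Roots of the quadratic.
  set p : ℂ := B / A with hp_def
  set q : ℂ := Cc / A with hq_def
  obtain ⟨s, hs⟩ := IsAlgClosed.exists_pow_nat_eq (k := ℂ) (p ^ 2 - 4 * q) zero_lt_two
  set r₁ : ℂ := (-p + s) / 2 with hr₁_def
  set r₂ : ℂ := (-p - s) / 2 with hr₂_def
  have hsum : r₁ + r₂ = -p := by rw [hr₁_def, hr₂_def]; ring
  have hprod : r₁ * r₂ = q := by
    rw [hr₁_def, hr₂_def]; linear_combination (-(1:ℂ)/4) * hs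
  have hroot : ∀ r : ℂ, r ^ 2 + p * r + q = 0 → ‖r‖ < 1 := by
    intro r hr
    apply hroots r
    have : A * (r ^ 2 + p * r + q) = A * r ^ 2 + B * r + Cc := by
      rw [hp_def, hq_def]; field_simp
    rw [show (1 - (b₂:ℂ)*z) * r ^ 2 + ((a₁:ℂ) - (b₁:ℂ)*z) * r + ((a₀:ℂ) - (b₀:ℂ)*z)
        = A * r ^ 2 + B * r + Cc from rfl, ← this, hr, mul_zero]
  have habs₁ : ‖r₁‖ < 1 := by
    apply hroot
    rw [hr₁_def]; linear_combination ((1:ℂ)/4) * hs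
  have habs₂ : ‖r₂‖ < 1 := by
    apply hroot
    rw [hr₂_def]; linear_combination ((1:ℂ)/4) * hs
  -- The contraction factor.
  set τ : ℝ := max (‖r₁‖) (‖r₂‖) with hτ_def
  have hτ0 : 0 ≤ τ := le_trans (norm_nonneg r₁) (le_max_left _ _)
  have hτ1 : τ < 1 := max_lt habs₁ habs₂
  have h1τ : (0:ℝ) < 1 - τ := by linarith
  -- Bound on the forcing term.
  set F : ℝ := h * ((|b₂| + |b₁| + |b₀|) * M) / ‖A‖ with hF_def
  have hF0 : 0 ≤ F := by
    apply div_nonneg _ (norm_nonneg A)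
    have : 0 ≤ |b₂| + |b₁| + |b₀| := by positivity
    positivity
  refine ⟨F / (1 - τ) ^ 2, by positivity, ?_⟩
  intro y hrec
  -- The forcing sequence and its bound.
  set f : ℕ → ℂ := fun n =>
    (h : ℂ) * ((b₂ : ℂ) * g (n + 2) + (b₁ : ℂ) * g (n + 1) + (b₀ : ℂ) * g n) / A with hf_def
  have hfb : ∀ n, ‖f n‖ ≤ F := by
    intro n
    have hS : ‖(b₂ : ℂ) * g (n + 2) + (b₁ : ℂ) * g (n + 1) + (b₀ : ℂ) * g n‖
        ≤ (|b₂| + |b₁| + |b₀|) * M := by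
      calc ‖(b₂ : ℂ) * g (n + 2) + (b₁ : ℂ) * g (n + 1) + (b₀ : ℂ) * g n‖
          ≤ ‖(b₂ : ℂ) * g (n + 2)‖ + ‖(b₁ : ℂ) * g (n + 1)‖
            + ‖(b₀ : ℂ) * g n‖ := by
            refine (norm_add_le _ _).trans ?_
            gcongr
            exact norm_add_le _ _
        _ ≤ |b₂| * M + |b₁| * M + |b₀| * M := by
            simp only [norm_mul, Complex.norm_real, Real.norm_eq_abs]
            gcongr <;> [exact hg _; exact hg _; exact hg _]
        _ = (|b₂| + |b₁| + |b₀|) * M := by ring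
    rw [hf_def, hF_def]
    simp only [norm_div, norm_mul, Complex.norm_real, Real.norm_eq_abs, abs_of_pos hh]
    gcongr
  -- Divided recurrence.
  have hdiv : ∀ n, y (n + 2) + p * y (n + 1) + q * y n = f n := by
    intro n
    rw [hp_def, hq_def, hf_def]
    field_simp
    linear_combination hrec n
  -- The auxiliary sequence.
  set u : ℕ → ℂ := fun n => y (n + 1) - r₂ * y n with hu_def
  have hurec : ∀ n, u (n + 1) = r₁ * u n + f n := by
    intro n
    have hd := hdiv n
    simp only [hu_def]
    linear_combination hd - (y (n+1)) * hsum + (y n) * hprod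
  -- Bound on u.
  have hub : ∀ n, ‖u n‖ ≤ τ ^ n * ‖u 0‖ + F / (1 - τ) := by
    intro n
    induction n with
    | zero => simp; positivity
    | succ n ih =>
      have key : τ * (F / (1 - τ)) + F = F / (1 - τ) := by field_simp; ring
      calc ‖u (n + 1)‖ = ‖r₁ * u n + f n‖ := by rw [hurec n]
        _ ≤ ‖r₁‖ * ‖u n‖ + F := by
            refine (norm_add_le _ _).trans ?_
            rw [norm_mul]
            gcongr
            exact hfb n
        _ ≤ τ * (τ ^ n * ‖u 0‖ + F / (1 - τ)) + F := by
            gcongr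
            exact le_max_left _ _
        _ = τ ^ (n + 1) * ‖u 0‖ + (τ * (F / (1 - τ)) + F) := by ring
        _ = τ ^ (n + 1) * ‖u 0‖ + F / (1 - τ) := by rw [key]
  -- Main bound on y.
  set Y : ℝ := ‖y 0‖ with hY_def
  set D : ℝ := ‖u 0‖ with hD_def
  set C : ℝ := F / (1 - τ) ^ 2 with hC_def
  have hC0 : 0 ≤ C := by positivity
  have hCkey : τ * C + F / (1 - τ) = C := by rw [hC_def]; field_simp; ring
  have hyb : ∀ n : ℕ, ‖y (n + 1)‖
      ≤ τ ^ (n + 1) * Y + ((n : ℝ) + 1) * τ ^ n * D + C := by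
    intro n
    induction n with
    | zero =>
      have : y 1 = r₂ * y 0 + u 0 := by rw [hu_def]; ring
      calc ‖y 1‖ ≤ ‖r₂‖ * Y + D := by
            rw [this]
            refine (norm_add_le _ _).trans ?_
            rw [norm_mul]
        _ ≤ τ ^ 1 * Y + 1 * τ ^ 0 * D + C := by
            simp only [pow_one, pow_zero, one_mul, mul_one]
            have : ‖r₂‖ * Y ≤ τ * Y := by
              gcongr
              exact le_max_right _ _
            push_cast
            linarith
        _ = τ ^ (0 + 1) * Y + (((0 : ℕ) : ℝ) + 1) * τ ^ 0 * D + C := by norm_num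
    | succ n ih =>
      have hsplit : y (n + 2) = r₂ * y (n + 1) + u (n + 1) := by rw [hu_def]; ring
      calc ‖y (n + 2)‖
          ≤ ‖r₂‖ * ‖y (n + 1)‖ + ‖u (n + 1)‖ := by
            rw [hsplit]
            refine (norm_add_le _ _).trans ?_
            rw [norm_mul]
        _ ≤ τ * (τ ^ (n + 1) * Y + ((n : ℝ) + 1) * τ ^ n * D + C)
            + (τ ^ (n + 1) * D + F / (1 - τ)) := by
            gcongr
            · exact le_max_right _ _
            · exact hub (n + 1)
        _ = τ ^ (n + 2) * Y + ((n : ℝ) + 2) * τ ^ (n + 1) * D + (τ * C + F / (1 - τ)) := by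
            ring
        _ = τ ^ (n + 1 + 1) * Y + (((n : ℕ) : ℝ) + 1 + 1) * τ ^ (n + 1) * D + C := by
            rw [hCkey]; ring
        _ = τ ^ (n + 1 + 1) * Y + ((((n + 1 : ℕ)) : ℝ) + 1) * τ ^ (n + 1) * D + C := by
            push_cast; ring
  -- The comparison sequence tends to C.
  set b : ℕ → ℝ := fun n => τ ^ (n + 1) * Y + ((n : ℝ) + 1) * τ ^ n * D + C with hb_def
  have hbt : Tendsto b atTop (nhds C) := by
    have h1 : Tendsto (fun n : ℕ => τ ^ (n + 1) * Y) atTop (nhds 0) := by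
      have := (tendsto_pow_atTop_nhds_zero_of_lt_one hτ0 hτ1).comp
        (tendsto_add_atTop_nat 1)
      simpa using this.mul_const Y
    have h2 : Tendsto (fun n : ℕ => ((n : ℝ) + 1) * τ ^ n * D) atTop (nhds 0) := by
      have ha : Tendsto (fun n : ℕ => (n : ℝ) * τ ^ n) atTop (nhds 0) :=
        tendsto_self_mul_const_pow_of_lt_one hτ0 hτ1
      have hb' : Tendsto (fun n : ℕ => τ ^ n) atTop (nhds 0) :=
        tendsto_pow_atTop_nhds_zero_of_lt_one hτ0 hτ1
      have : Tendsto (fun n : ℕ => ((n : ℝ) * τ ^ n + τ ^ n) * D) atTop (nhds ((0 + 0) * D)) :=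
        (ha.add hb').mul_const D
      simpa [add_mul, mul_comm, mul_assoc, mul_left_comm, add_comm] using this.congr
        (fun n => by ring)
    have h3 := (h1.add h2).add (tendsto_const_nhds (x := C) (f := atTop))
    rw [hb_def]
    simpa using h3
  -- Boundedness.
  obtain ⟨K, hK⟩ := hbt.bddAbove_range
  have hKmem : ∀ n, b n ≤ K := fun n => hK (Set.mem_range_self n)
  have hbound : ∀ n, ‖y n‖ ≤ max Y K := by
    intro n
    cases n with
    | zero => exact le_max_left _ _
    | succ n => exact le_trans (hyb n) (le_trans (hKmem n) (le_max_right _ _))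
  refine ⟨⟨max Y K, hbound⟩, ?_⟩
  -- Limsup bound.
  have hshift : Tendsto (fun n : ℕ => b (n - 1)) atTop (nhds C) :=
    hbt.comp (tendsto_sub_atTop_nat 1)
  have hev : ∀ᶠ n in atTop, ‖y n‖ ≤ b (n - 1) := by
    filter_upwards [eventually_ge_atTop 1] with n hn
    obtain ⟨m, rfl⟩ := Nat.exists_eq_add_of_le hn
    have h1 := hyb m
    simp only [hb_def]
    rw [add_comm 1 m]
    exact h1
  calc limsup (fun n => ‖y n‖) atTop
      ≤ limsup (fun n : ℕ => b (n - 1)) atTop := by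
        refine limsup_le_limsup hev ?_ ?_
        · exact Filter.isCoboundedUnder_le_of_eventually_le atTop
            (Filter.Eventually.of_forall fun n => norm_nonneg _)
        · exact hshift.isBoundedUnder_le
    _ = C := hshift.limsup_eq
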